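/- arXiv:1901.10686 — 4 statements merged into one kernel-verified Lean document; each statement's English description precedes it below -/
import Mathlib

section
/- Let R be a commutative Noetherian ring, P a finitely generated projective R-module, N ⊆ R an ideal, and p₁,…,p_d ∈ P elements whose images in P/NP form a basis of the free R/N-module P/NP. Then P_{1+N} is a free R_{1+N}-module with basis the images of p₁,…,p_d, where R_{1+N} denotes localization at the multiplicative set 1 + N. -/
/-- The multiplicative set `1 + N = {1 + a : a ∈ N}` for an ideal `N`. -/
def onePlus {R : Type} [CommRing R] (N : Ideal R) : Submonoid R where
  carrier := {x | ∃ a ∈ N, x = 1 + a}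
  one_mem' := ⟨0, N.zero_mem, by ring⟩
  mul_mem' := by
    rintro x y ⟨a, ha, rfl⟩ ⟨b, hb, rfl⟩
    exact ⟨a + b + a * b, by
      exact add_mem (add_mem ha hb) (N.mul_mem_right b ha), by ring⟩

private lemma smul_cancel_of_isUnit {R M : Type*} [CommRing R] [AddCommGroup M] [Module R M]
    {x : R} (hx : IsUnit x) {a b : M} (h : x • a = x • b) : a = b := by
  obtain ⟨u, rfl⟩ := hx
  have := congrArg (fun z => (↑u⁻¹ : R) • z) h
  simpa [smul_smul] using this

set_option maxHeartbeats 1000000 in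
/-- If the images of `p₁, …, p_d` in `P/NP` form a basis of the free
`R/N`-module `P/NP`, then the images of `p₁, …, p_d` in `P_{1+N}` form a basis
of the free `R_{1+N}`-module `P_{1+N}`. -/
theorem basis_lifts_to_one_plus_localization {R : Type} [CommRing R] [IsNoetherianRing R]
    (P : Type) [AddCommGroup P] [Module R P] [Module.Finite R P] [Module.Projective R P]
    (N : Ideal R) (d : ℕ) (p : Fin d → P)
    (b : Module.Basis (Fin d) (R ⧸ N) (P ⧸ (N • (⊤ : Submodule R P))))
    (hb : ∀ i, b i = Submodule.Quotient.mk (p i)) :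
    ∃ c : Module.Basis (Fin d) (Localization (onePlus N)) (LocalizedModule (onePlus N) P),
      ∀ i, c i = LocalizedModule.mkLinearMap (onePlus N) P (p i) := by
  classical
  set S : Submonoid R := onePlus N with hSdef
  set R' : Type := Localization S with hR'
  set P' : Type := LocalizedModule S P with hP'
  set f : P →ₗ[R] P' := LocalizedModule.mkLinearMap S P with hf
  set N' : Ideal R' := N.map (algebraMap R R') with hN'
  -- units from 1 + N'
  have hunit : ∀ z ∈ N', IsUnit (1 + z) := by
    intro z hz
    obtain ⟨⟨a, s⟩, h⟩ := (IsLocalization.mem_map_algebraMap_iff S R').mp hz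
    obtain ⟨n, hn, hs⟩ := s.2
    have h1 : (1 + z) * algebraMap R R' (s : R) = algebraMap R R' ((s : R) + (a : R)) := by
      rw [map_add, add_mul, one_mul, h]
    have h2 : ((s : R) + (a : R)) ∈ S := by
      refine ⟨n + a, add_mem hn a.2, by rw [hs]; ring⟩
    have h3 := IsLocalization.map_units R' (⟨_, h2⟩ : S)
    rw [← h1] at h3
    exact isUnit_of_mul_isUnit_left h3
  have hjac : N' ≤ Ideal.jacobson ⊥ := by
    intro z hz
    rw [Ideal.mem_jacobson_bot]
    intro y
    have := hunit (z * y) (Ideal.mul_mem_right y _ hz)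
    rwa [add_comm] at this
  -- the natural map
  set φ : (Fin d → R') →ₗ[R'] P' := Fintype.linearCombination R' (fun i => f (p i)) with hφdef
  have hφ : ∀ x : Fin d → R', φ x = ∑ i, x i • f (p i) := fun x => rfl
  -- image of N•⊤ lands in N'•⊤
  have hNsmul : ∀ m ∈ (N • ⊤ : Submodule R P), f m ∈ (N' • ⊤ : Submodule R' P') := by
    intro m hm
    refine Submodule.smul_induction_on hm ?_ ?_
    · intro r hr x _
      rw [map_smul, ← algebraMap_smul R' r (f x)]
      exact Submodule.smul_mem_smul (Ideal.mem_map_of_mem _ hr) trivial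
    · intro x y hx hy
      rw [map_add]; exact Submodule.add_mem _ hx hy
  -- decomposition modulo N•⊤
  have hdecomp : ∀ m : P, ∃ r : Fin d → R, m - ∑ i, r i • p i ∈ (N • ⊤ : Submodule R P) := by
    intro m
    choose r hr using fun i =>
      Ideal.Quotient.mk_surjective (I := N) (b.repr (Submodule.Quotient.mk m) i)
    refine ⟨r, ?_⟩
    rw [← Submodule.Quotient.mk_eq_zero, Submodule.Quotient.mk_sub]
    have key : Submodule.Quotient.mk (p := (N • ⊤ : Submodule R P)) (∑ i, r i • p i)
        = Submodule.Quotient.mk m := by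
      rw [← Submodule.mkQ_apply, map_sum]
      have h1 : ∀ i, (N • ⊤ : Submodule R P).mkQ (r i • p i)
          = (b.repr (Submodule.Quotient.mk m) i) • b i := by
        intro i
        rw [Submodule.mkQ_apply, hb i, ← hr i, Module.Quotient.mk_smul_mk]
      rw [Finset.sum_congr rfl (fun i _ => h1 i)]
      exact b.sum_repr _
    rw [key, sub_self]
  -- surjectivity
  have hFin : Module.Finite R' P' := Module.Finite.of_isLocalizedModule S f
  have hrange : ∀ m : P, f m ∈ LinearMap.range φ ⊔ N' • (⊤ : Submodule R' P') := by
    intro m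
    obtain ⟨r, hr⟩ := hdecomp m
    have h1 : φ (fun i => algebraMap R R' (r i)) = f (∑ i, r i • p i) := by
      rw [hφ, map_sum]
      exact (Finset.sum_congr rfl fun i _ => by rw [map_smul, algebraMap_smul]).symm
    have h2 : f m = φ (fun i => algebraMap R R' (r i)) + f (m - ∑ i, r i • p i) := by
      rw [h1, ← map_add]
      congr 1
      abel
    rw [h2]
    exact Submodule.add_mem _ (Submodule.mem_sup_left ⟨_, rfl⟩)
      (Submodule.mem_sup_right (hNsmul _ hr))
  have htop : (⊤ : Submodule R' P') ≤ LinearMap.range φ ⊔ N' • ⊤ := by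
    intro y _
    induction y using LocalizedModule.induction_on with
    | h m s =>
      have h1 : (LocalizedModule.mk m s : P') = Localization.mk 1 s • f m := by
        show (LocalizedModule.mk m s : P') = Localization.mk 1 s • LocalizedModule.mk m 1
        rw [LocalizedModule.mk_smul_mk, one_smul, mul_one]
      rw [h1]
      exact Submodule.smul_mem _ _ (hrange m)
  have hsurj : Function.Surjective φ := by
    rw [← LinearMap.range_eq_top]
    have hfg : (⊤ : Submodule R' P').FG := Module.Finite.fg_top
    have h1 := Submodule.sup_eq_sup_smul_of_le_smul_of_le_jacobson hfg hjac htop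
    rw [sup_top_eq, Submodule.bot_smul, sup_bot_eq] at h1
    exact h1.symm
  -- kernel elements have coordinates in N'
  have hker : ∀ x : Fin d → R', φ x = 0 → ∀ i, x i ∈ N' := by
    intro x hx
    obtain ⟨s, hs⟩ := IsLocalization.exist_integer_multiples S Finset.univ x
    choose r hr using fun i : Fin d => hs i (Finset.mem_univ i)
    -- f (∑ r i • p i) = 0
    have h0 : f (∑ j, r j • p j) = 0 := by
      rw [map_sum]
      calc ∑ j, f (r j • p j) = (s : R) • φ x := by
            rw [hφ, Finset.smul_sum]
            refine Finset.sum_congr rfl fun j _ => ?_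
            rw [map_smul, ← algebraMap_smul R' (r j) (f (p j)), hr j, smul_assoc]
        _ = 0 := by rw [hx, smul_zero]
    -- so a further multiple dies in P
    have h0' : ∃ t : S, (t : R) • (∑ j, r j • p j) = 0 := by
      have hmk : (LocalizedModule.mk (∑ j, r j • p j) 1 : P') = LocalizedModule.mk 0 1 := by
        rw [LocalizedModule.zero_mk]
        exact h0
      rw [LocalizedModule.mk_eq] at hmk
      obtain ⟨u, hu⟩ := hmk
      exact ⟨u, by simpa [Submonoid.smul_def] using hu⟩
    obtain ⟨t, ht⟩ := h0'
    -- coefficients are in N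
    have h2 : ∑ j, ((t : R) * r j) • p j = 0 := by
      rw [← ht, Finset.smul_sum]
      exact Finset.sum_congr rfl fun j _ => mul_smul _ _ _
    have h3 : ∑ j, (Ideal.Quotient.mk N ((t : R) * r j)) • b j = 0 := by
      calc ∑ j, (Ideal.Quotient.mk N ((t : R) * r j)) • b j
          = Submodule.Quotient.mk (p := (N • ⊤ : Submodule R P)) (∑ j, ((t : R) * r j) • p j) := by
            rw [← Submodule.mkQ_apply, map_sum]
            exact Finset.sum_congr rfl fun j _ => by
              rw [Submodule.mkQ_apply, hb j, Module.Quotient.mk_smul_mk]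
        _ = 0 := by rw [h2, Submodule.Quotient.mk_zero]
    have hcoef : ∀ j, (t : R) * r j ∈ N := by
      intro j
      have := Fintype.linearIndependent_iff.mp b.linearIndependent _ h3 j
      rwa [← Ideal.Quotient.eq_zero_iff_mem]
    intro i
    have hx_eq : x i = IsLocalization.mk' R' (r i) s := by
      rw [IsLocalization.eq_mk'_iff_mul_eq, hr i, Algebra.smul_def, mul_comm]
    rw [hx_eq]
    exact (IsLocalization.mk'_mem_map_algebraMap_iff S R' N (r i) s).mpr ⟨(t : R), t.2, hcoef i⟩
  -- splitting via projectivity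
  obtain ⟨g, hg⟩ := Module.projective_lifting_property (φ.restrictScalars R) f
    (by exact hsurj)
  have hEnd : ∀ s : S, IsUnit ((algebraMap R (Module.End R (Fin d → R'))) (s : R)) := by
    intro s
    rw [Module.End.isUnit_iff]
    obtain ⟨u, hu⟩ := IsLocalization.map_units R' s
    have key1 : ∀ y : Fin d → R', (s : R) • ((↑u⁻¹ : R') • y) = y := by
      intro y
      rw [← algebraMap_smul R' (s : R) ((↑u⁻¹ : R') • y), smul_smul, ← hu, Units.mul_inv, one_smul]
    have key2 : ∀ y : Fin d → R', (↑u⁻¹ : R') • ((s : R) • y) = y := by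
      intro y
      rw [← algebraMap_smul R' (s : R) y, smul_smul, ← hu, Units.inv_mul, one_smul]
    constructor
    · intro a c hac
      simp only [Module.algebraMap_end_apply] at hac
      calc a = (↑u⁻¹ : R') • ((s : R) • a) := (key2 a).symm
        _ = (↑u⁻¹ : R') • ((s : R) • c) := by rw [hac]
        _ = c := key2 c
    · intro y
      exact ⟨(↑u⁻¹ : R') • y, by rw [Module.algebraMap_end_apply]; exact key1 y⟩
  set h₀ : P' →ₗ[R] (Fin d → R') := LocalizedModule.lift S g hEnd with hh₀def
  have hh₀ : ∀ m : P, h₀ (f m) = g m := fun m =>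
    LinearMap.congr_fun (LocalizedModule.lift_comp S g hEnd) m
  set h : P' →ₗ[R'] (Fin d → R') := h₀.extendScalarsOfIsLocalization S R' with hhdef
  have hφh : ∀ y : P', φ (h y) = y := by
    have hm : ∀ m : P, φ (h (f m)) = f m := by
      intro m
      show φ (h₀ (f m)) = f m
      rw [hh₀]
      exact LinearMap.congr_fun hg m
    intro y
    induction y using LocalizedModule.induction_on with
    | h m s =>
      have hsy : (s : R) • (LocalizedModule.mk m s : P') = f m := by
        show (s : R) • (LocalizedModule.mk m s : P') = LocalizedModule.mk m 1
        rw [LocalizedModule.smul'_mk, ← Submonoid.smul_def, LocalizedModule.mk_cancel]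
      have h1 : φ (h ((s : R) • (LocalizedModule.mk m s : P')))
          = (s : R) • (LocalizedModule.mk m s : P') := by
        rw [hsy]; exact hm m
      rw [LinearMap.map_smul_of_tower, LinearMap.map_smul_of_tower] at h1
      refine smul_cancel_of_isUnit (IsLocalization.map_units R' s) ?_
      rw [algebraMap_smul, algebraMap_smul]
      exact h1
  -- the endomorphism h ∘ φ has determinant a unit
  set ψ : (Fin d → R') →ₗ[R'] (Fin d → R') := h ∘ₗ φ with hψdef
  have hψker : ∀ v : Fin d → R', ∀ i, (ψ v - v) i ∈ N' := by
    intro v i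
    apply hker
    rw [map_sub]
    show φ (h (φ v)) - φ v = 0
    rw [hφh, sub_self]
  set bR := Pi.basisFun R' (Fin d) with hbRdef
  set A := LinearMap.toMatrix bR bR ψ with hAdef
  have hA : ∀ i j, A i j = ψ (bR j) i := by
    intro i j
    rw [hAdef, LinearMap.toMatrix_apply, Pi.basisFun_repr]
  have hbR1 : ∀ i j, (bR j : Fin d → R') i = (1 : Matrix (Fin d) (Fin d) R') i j := by
    intro i j
    simp [hbRdef, Matrix.one_apply, Pi.single_apply]
  have hAmod : (Ideal.Quotient.mk N').mapMatrix A = 1 := by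
    ext i j
    rw [RingHom.mapMatrix_apply, Matrix.map_apply]
    have h1 : A i j - (1 : Matrix (Fin d) (Fin d) R') i j ∈ N' := by
      have := hψker (bR j) i
      rwa [Pi.sub_apply, ← hA, hbR1] at this
    have h2 : (Ideal.Quotient.mk N') (A i j)
        = (Ideal.Quotient.mk N') ((1 : Matrix (Fin d) (Fin d) R') i j) :=
      (Ideal.Quotient.mk_eq_mk_iff_sub_mem _ _).mpr h1
    rw [h2, Matrix.one_apply, Matrix.one_apply, apply_ite (Ideal.Quotient.mk N'), map_one, map_zero]
  have hdet : IsUnit A.det := by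
    have h1 : Ideal.Quotient.mk N' A.det = 1 := by
      rw [RingHom.map_det, hAmod, Matrix.det_one]
    have h2 : A.det - 1 ∈ N' :=
      (Ideal.Quotient.mk_eq_mk_iff_sub_mem _ _).mp (by rw [h1, map_one])
    have h3 : A.det = 1 + (A.det - 1) := by ring
    rw [h3]
    exact hunit _ h2
  have hinj : Function.Injective φ := by
    let e := LinearEquiv.ofIsUnitDet hdet
    have he : (e : (Fin d → R') →ₗ[R'] (Fin d → R')) = ψ := LinearEquiv.coe_ofIsUnitDet hdet
    intro a c hac
    have h1 : ψ a = ψ c := by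
      show h (φ a) = h (φ c)
      rw [hac]
    apply e.injective
    have h2 : ∀ v, e v = ψ v := fun v => by rw [← he]; rfl
    rw [h2, h2, h1]
  refine ⟨bR.map (LinearEquiv.ofBijective φ ⟨hinj, hsurj⟩), ?_⟩
  intro i
  rw [Module.Basis.map_apply]
  have h1 : (bR i : Fin d → R') = Pi.single i 1 := by
    ext j
    simp [hbRdef, Pi.single_apply]
  rw [h1]
  show Fintype.linearCombination R' (fun i => f (p i)) (Pi.single i 1)
      = LocalizedModule.mkLinearMap S P (p i)
  rw [Fintype.linearCombination_apply_single, one_smul]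
end

section
/- Let R be a commutative Noetherian ring of dimension d ≥ 2, J ⊆ R an ideal of height d, and a₁,…,a_d ∈ J elements generating J modulo NJ for an ideal N with NJ ⊆ J². Then there exists c ∈ NJ such that J = (a₁,…,a_d, c). -/
/-- The height of an ideal: the infimum, over primes containing it, of the
height of the prime in the prime spectrum. -/
noncomputable def idealHeight {R : Type} [CommRing R] (J : Ideal R) : ℕ∞ :=
  ⨅ p : {p : PrimeSpectrum R // J ≤ p.asIdeal}, Order.height p.val

/-- If `a₁, …, a_d ∈ J` generate `J` modulo `N·J` where `N·J ⊆ J²`, then there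
is a single element `c ∈ N·J` such that `J = (a₁, …, a_d, c)`. -/
theorem generators_plus_one_element {R : Type} [CommRing R] [IsNoetherianRing R]
    (d : ℕ) (hd : 2 ≤ d) (hdim : ringKrullDim R = d)
    (J N : Ideal R) (hht : idealHeight J = d)
    (a : Fin d → R) (ha : ∀ i, a i ∈ J)
    (hNJ : N * J ≤ J ^ 2)
    (hgen : J = Ideal.span (Set.range a) ⊔ N * J) :
    ∃ c ∈ N * J, J = Ideal.span (insert c (Set.range a)) := by
  set I : Ideal R := Ideal.span (Set.range a) with hI
  have hIJ : I ≤ J := Ideal.span_le.mpr (by rintro x ⟨i, rfl⟩; exact ha i)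
  have hNJJ : N * J ≤ J := le_trans hNJ (by
    rw [pow_two]; exact Ideal.mul_le_left.trans le_rfl)
  -- key: J ≤ I ⊔ (N*J)*J
  have hkey : J ≤ I ⊔ (N * J) * J := by
    have h2 : J ^ 2 ≤ I ⊔ (N * J) * J := by
      rw [pow_two]
      calc J * J = (I ⊔ N * J) * J := by rw [← hgen]
        _ = I * J ⊔ (N * J) * J := by rw [Ideal.sup_mul]
        _ ≤ I ⊔ (N * J) * J := sup_le_sup_right (Ideal.mul_le_inf.trans inf_le_left) _
    calc J = I ⊔ N * J := hgen
      _ ≤ I ⊔ J ^ 2 := sup_le_sup_left hNJ _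
      _ ≤ I ⊔ (I ⊔ (N * J) * J) := sup_le_sup_left h2 _
      _ = I ⊔ (N * J) * J := by rw [← sup_assoc, sup_idem]
  -- pass to R ⧸ I as a module
  let f : R →ₗ[R] R ⧸ (I : Submodule R R) := (I : Submodule R R).mkQ
  have hfg : (Submodule.map f (J : Submodule R R)).FG :=
    Submodule.FG.map _ (IsNoetherian.noetherian _)
  have hle : Submodule.map f (J : Submodule R R) ≤
      (N * J) • Submodule.map f (J : Submodule R R) := by
    rw [← Submodule.map_smul'']
    rintro _ ⟨x, hx, rfl⟩
    rcases Submodule.mem_sup.mp (hkey hx) with ⟨y, hy, z, hz, rfl⟩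
    have : f (y + z) = f z := by
      have hy0 : f y = 0 := (Submodule.Quotient.mk_eq_zero _).mpr hy
      rw [map_add, hy0, zero_add]
    rw [this]
    exact Submodule.mem_map_of_mem hz
  obtain ⟨r, hr1, hr2⟩ :=
    Submodule.exists_sub_one_mem_and_smul_eq_zero_of_fg_of_le_smul (N * J) _ hfg hle
  refine ⟨1 - r, ?_, ?_⟩
  · have := (N * J).neg_mem hr1; simpa using this
  · apply le_antisymm
    · intro x hx
      have h0 : r • f x = 0 := hr2 _ (Submodule.mem_map_of_mem hx)
      have hrx : r * x ∈ I := by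
        rw [← Submodule.Quotient.mk_eq_zero (I : Submodule R R)]
        simpa [f, Algebra.smul_def, Ideal.Quotient.algebraMap_eq] using h0
      have : x = (1 - r) * x + r * x := by ring
      rw [this]
      refine Ideal.add_mem _ ?_ ?_
      · exact Ideal.mul_mem_right _ _ (Ideal.subset_span (Set.mem_insert _ _))
      · exact Ideal.span_mono (Set.subset_insert _ _) hrx
    · rw [Ideal.span_le]
      rintro x (rfl | ⟨i, rfl⟩)
      · exact hNJJ (by have := (N * J).neg_mem hr1; simpa using this)
      · exact ha i
end

section
/- Let G be a free abelian group with basis B = (e_i)_{i∈I}, and let ∼ be an equivalence relation on B. Call x ∈ G 'nicely reduced' if x = e_1 + ⋯ + e_r with e_i ≁ e_j for i ≠ j. Let S ⊆ G satisfy: (1) every element of S is nicely reduced; (2) if x, y, x+y are all nicely reduced and two of them lie in S, then so does the third; (3) for every nicely reduced x ∈ G∖S and every finite J ⊆ I there is y ∈ G that is nicely reduced, with x + y ∈ S and y + e_j nicely reduced for all j ∈ J. Let H be the subgroup generated by S. Then every nicely reduced element of H lies in S. -/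
namespace EulerClassAux

structure Ctx (ι : Type) where
  r : ι → ι → Prop
  hr : Equivalence r
  S : Set (ι →₀ ℤ)
  NR : Set (ι →₀ ℤ)
  hNR : ∀ x, x ∈ NR ↔ ∃ s : Finset ι,
      x = ∑ i ∈ s, Finsupp.single i 1 ∧
      ∀ i ∈ s, ∀ j ∈ s, i ≠ j → ¬ r i j
  h1 : S ⊆ NR
  h2 : ∀ x y, x ∈ NR → y ∈ NR → x + y ∈ NR →
      ((x ∈ S ∧ y ∈ S) → x + y ∈ S) ∧
      ((x ∈ S ∧ x + y ∈ S) → y ∈ S) ∧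
      ((y ∈ S ∧ x + y ∈ S) → x ∈ S)
  h3 : ∀ x ∈ NR, x ∉ S → ∀ J : Finset ι,
      ∃ y ∈ NR, x + y ∈ S ∧ ∀ j ∈ J, y + Finsupp.single j 1 ∈ NR

namespace Ctx

attribute [local instance] Classical.propDecidable

variable {ι : Type} (C : Ctx ι)

/-- Compatibility: supports are disjoint and pairwise inequivalent
(reflexivity of `r` makes one condition do both jobs). -/
def Compat (x y : ι →₀ ℤ) : Prop := ∀ i j, x i ≠ 0 → y j ≠ 0 → ¬ C.r i j

/-- `w` avoids (the equivalence classes of) everything in `J`. -/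
def Gen (J : Finset ι) (w : ι →₀ ℤ) : Prop := ∀ j ∈ J, ∀ i, w i ≠ 0 → ¬ C.r j i

lemma sum_single_apply (s : Finset ι) (j : ι) :
    (∑ i ∈ s, Finsupp.single i (1 : ℤ)) j = if j ∈ s then 1 else 0 := by
  rw [Finsupp.finset_sum_apply]
  rw [Finset.sum_congr rfl (fun i _ => Finsupp.single_apply)]
  exact Finset.sum_ite_eq' s j (fun _ => (1 : ℤ))

lemma mem_NR_iff (x : ι →₀ ℤ) :
    x ∈ C.NR ↔ (∀ i, x i = 0 ∨ x i = 1) ∧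
      (∀ i j, i ≠ j → x i ≠ 0 → x j ≠ 0 → ¬ C.r i j) := by
  constructor
  · rintro hx
    obtain ⟨s, rfl, hs⟩ := (C.hNR _).1 hx
    constructor
    · intro i
      rw [sum_single_apply]
      by_cases h : i ∈ s <;> simp [h]
    · intro i j hij hi hj
      rw [sum_single_apply] at hi hj
      by_cases h : i ∈ s
      · by_cases h' : j ∈ s
        · exact hs i h j h' hij
        · simp [h'] at hj
      · simp [h] at hi
  · rintro ⟨hc, hp⟩
    refine (C.hNR _).2 ⟨x.support, ?_, ?_⟩
    · ext j
      rw [sum_single_apply]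
      by_cases h : j ∈ x.support
      · rcases hc j with h0 | h1
        · exact absurd h0 (Finsupp.mem_support_iff.1 h)
        · simp [h, h1]
      · simp [h, Finsupp.notMem_support_iff.1 h]
    · intro i hi j hj hij
      exact hp i j hij (Finsupp.mem_support_iff.1 hi) (Finsupp.mem_support_iff.1 hj)

lemma NR_coord {x : ι →₀ ℤ} (hx : x ∈ C.NR) (i : ι) : x i = 0 ∨ x i = 1 :=
  ((C.mem_NR_iff x).1 hx).1 i

lemma NR_pair {x : ι →₀ ℤ} (hx : x ∈ C.NR) :
    ∀ i j, i ≠ j → x i ≠ 0 → x j ≠ 0 → ¬ C.r i j :=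
  ((C.mem_NR_iff x).1 hx).2

lemma NR_zero : (0 : ι →₀ ℤ) ∈ C.NR := by
  rw [mem_NR_iff]
  exact ⟨fun i => Or.inl rfl, fun i j _ hi _ => absurd rfl hi⟩

lemma NR_single (i : ι) : Finsupp.single i (1 : ℤ) ∈ C.NR := by
  rw [mem_NR_iff]
  constructor
  · intro j
    rw [Finsupp.single_apply]
    by_cases h : i = j <;> simp [h]
  · intro a b hab ha hb
    rw [Finsupp.single_apply] at ha hb
    by_cases h : i = a
    · by_cases h' : i = b
      · exact absurd (h ▸ h') hab
      · simp [h'] at hb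
    · simp [h] at ha

lemma compat_symm {x y : ι →₀ ℤ} (h : C.Compat x y) : C.Compat y x :=
  fun i j hi hj hr => h j i hj hi (C.hr.symm hr)

lemma compat_disjoint {x y : ι →₀ ℤ} (h : C.Compat x y) (i : ι)
    (hi : x i ≠ 0) : y i = 0 := by
  by_contra hyi
  exact h i i hi hyi (C.hr.refl i)

lemma NR_add {x y : ι →₀ ℤ} (hx : x ∈ C.NR) (hy : y ∈ C.NR)
    (h : C.Compat x y) : x + y ∈ C.NR := by
  rw [mem_NR_iff]
  constructor
  · intro i
    rw [Finsupp.add_apply]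
    by_cases hxi : x i = 0
    · rw [hxi, zero_add]; exact C.NR_coord hy i
    · rw [C.compat_disjoint h i hxi, add_zero]; exact C.NR_coord hx i
  · intro i j hij hi hj
    rw [Finsupp.add_apply] at hi hj
    have hi' : x i ≠ 0 ∨ y i ≠ 0 := by
      by_contra hc
      push_neg at hc
      rw [hc.1, hc.2] at hi; exact hi rfl
    have hj' : x j ≠ 0 ∨ y j ≠ 0 := by
      by_contra hc
      push_neg at hc
      rw [hc.1, hc.2] at hj; exact hj rfl
    rcases hi' with hxi | hyi <;> rcases hj' with hxj | hyj
    · exact C.NR_pair hx i j hij hxi hxj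
    · exact h i j hxi hyj
    · exact fun hr => h j i hxj hyi (C.hr.symm hr)
    · exact C.NR_pair hy i j hij hyi hyj

lemma compat_of_NR_add {x y : ι →₀ ℤ} (hx : x ∈ C.NR) (hy : y ∈ C.NR)
    (hxy : x + y ∈ C.NR) : C.Compat x y := by
  intro i j hxi hyj
  have hx1 : x i = 1 := (C.NR_coord hx i).resolve_left hxi
  have hy1 : y j = 1 := (C.NR_coord hy j).resolve_left hyj
  have hsum : ∀ k, x k + y k = 0 ∨ x k + y k = 1 := by
    intro k
    have := C.NR_coord hxy k
    rwa [Finsupp.add_apply] at this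
  by_cases hij : i = j
  · subst hij
    rcases hsum i with h0 | h1 <;> rw [hx1, hy1] at * <;> omega
  · have hxyi : x i + y i ≠ 0 := by
      rcases C.NR_coord hy i with h0 | h1
      · rw [hx1, h0]; omega
      · rcases hsum i with h | h <;> omega
    have hxyj : x j + y j ≠ 0 := by
      rcases C.NR_coord hx j with h0 | h1
      · rw [hy1, h0]; omega
      · rcases hsum j with h | h <;> omega
    have := C.NR_pair hxy i j hij
    rw [Finsupp.add_apply, Finsupp.add_apply] at this
    exact this hxyi hxyj

lemma compat_add_left {x y z : ι →₀ ℤ}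
    (h1 : C.Compat x z) (h2 : C.Compat y z) : C.Compat (x + y) z := by
  intro i j hi hj
  rw [Finsupp.add_apply] at hi
  have : x i ≠ 0 ∨ y i ≠ 0 := by
    by_contra hc
    push_neg at hc
    rw [hc.1, hc.2] at hi; exact hi rfl
  rcases this with h | h
  · exact h1 i j h hj
  · exact h2 i j h hj

lemma compat_add_right {x y z : ι →₀ ℤ}
    (h1 : C.Compat z x) (h2 : C.Compat z y) : C.Compat z (x + y) :=
  C.compat_symm (C.compat_add_left (C.compat_symm h1) (C.compat_symm h2))

lemma compat_zero_left (x : ι →₀ ℤ) : C.Compat 0 x :=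
  fun _ _ hi _ => absurd rfl hi

lemma compat_zero_right (x : ι →₀ ℤ) : C.Compat x 0 :=
  fun _ _ _ hj => absurd rfl hj

lemma gen_mono {J J' : Finset ι} {w : ι →₀ ℤ} (h : J' ⊆ J) (hw : C.Gen J w) :
    C.Gen J' w := fun j hj => hw j (h hj)

lemma gen_add {J : Finset ι} {w₁ w₂ : ι →₀ ℤ} (h₁ : C.Gen J w₁) (h₂ : C.Gen J w₂) :
    C.Gen J (w₁ + w₂) := by
  intro j hj i hi
  rw [Finsupp.add_apply] at hi
  have : w₁ i ≠ 0 ∨ w₂ i ≠ 0 := by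
    by_contra hc
    push_neg at hc
    rw [hc.1, hc.2] at hi; exact hi rfl
  rcases this with h | h
  · exact h₁ j hj i h
  · exact h₂ j hj i h

lemma compat_of_gen {J : Finset ι} {x w : ι →₀ ℤ} (h : C.Gen J w)
    (hx : x.support ⊆ J) : C.Compat x w :=
  fun i j hi hj => h i (hx (Finsupp.mem_support_iff.2 hi)) j hj

lemma gen_of_forall_single {J : Finset ι} {y : ι →₀ ℤ} (hy : y ∈ C.NR)
    (h : ∀ j ∈ J, y + Finsupp.single j 1 ∈ C.NR) : C.Gen J y := by
  intro j hj i hi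
  have hcomp : C.Compat y (Finsupp.single j 1) :=
    C.compat_of_NR_add hy (C.NR_single j) (h j hj)
  have : ¬ C.r i j := hcomp i j hi (by simp [Finsupp.single_apply])
  exact fun hr => this (C.hr.symm hr)

lemma S_zero : (0 : ι →₀ ℤ) ∈ C.S := by
  by_contra h0
  obtain ⟨y, hyN, hyS, -⟩ := C.h3 0 C.NR_zero h0 ∅
  rw [zero_add] at hyS
  have := (C.h2 y 0 hyN C.NR_zero (by rw [add_zero]; exact hyN)).2.1
  rw [add_zero] at this
  exact h0 (this ⟨hyS, hyS⟩)

/-- Both in `S` and compatible: sum in `S`. -/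
lemma S_add {x y : ι →₀ ℤ} (hx : x ∈ C.S) (hy : y ∈ C.S) (h : C.Compat x y) :
    x + y ∈ C.S :=
  (C.h2 x y (C.h1 hx) (C.h1 hy) (C.NR_add (C.h1 hx) (C.h1 hy) h)).1 ⟨hx, hy⟩

/-- Cancellation: if `x ∈ S` and `x + y ∈ S` then `y ∈ S`. -/
lemma S_cancel {x y : ι →₀ ℤ} (hyN : y ∈ C.NR) (hx : x ∈ C.S)
    (hxy : x + y ∈ C.S) : y ∈ C.S :=
  (C.h2 x y (C.h1 hx) hyN (C.h1 hxy)).2.1 ⟨hx, hxy⟩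

lemma S_cancel' {x y : ι →₀ ℤ} (hxN : x ∈ C.NR) (hy : y ∈ C.S)
    (hxy : x + y ∈ C.S) : x ∈ C.S :=
  (C.h2 x y hxN (C.h1 hy) (C.h1 hxy)).2.2 ⟨hy, hxy⟩

/-- The moving lemma, extended to all nicely reduced elements. -/
lemma move {u : ι →₀ ℤ} (hu : u ∈ C.NR) (J : Finset ι) :
    ∃ w, w ∈ C.NR ∧ u + w ∈ C.S ∧ C.Gen J w := by
  by_cases huS : u ∈ C.S
  · by_cases hall : ∀ z ∈ C.NR, z ∈ C.S
    · exact ⟨0, C.NR_zero, by rwa [add_zero], fun j _ i hi => absurd rfl hi⟩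
    · push_neg at hall
      obtain ⟨n₀, hn₀N, hn₀S⟩ := hall
      obtain ⟨y₁, hy₁N, hny₁S, hy₁gen'⟩ := C.h3 n₀ hn₀N hn₀S (J ∪ u.support)
      have hy₁gen : C.Gen (J ∪ u.support) y₁ := C.gen_of_forall_single hy₁N hy₁gen'
      have hy₁S : y₁ ∉ C.S := fun hy₁S =>
        hn₀S (C.S_cancel' hn₀N hy₁S hny₁S)
      obtain ⟨y₂, hy₂N, hy₁y₂S, hy₂gen'⟩ := C.h3 y₁ hy₁N hy₁S (J ∪ u.support)
      have hy₂gen : C.Gen (J ∪ u.support) y₂ := C.gen_of_forall_single hy₂N hy₂gen'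
      have hw : C.Gen (J ∪ u.support) (y₁ + y₂) := C.gen_add hy₁gen hy₂gen
      have hcuw : C.Compat u (y₁ + y₂) :=
        C.compat_of_gen hw Finset.subset_union_right
      refine ⟨y₁ + y₂, C.h1 hy₁y₂S, ?_, C.gen_mono Finset.subset_union_left hw⟩
      exact C.S_add huS hy₁y₂S hcuw
  · obtain ⟨y, hyN, huyS, hygen'⟩ := C.h3 u hu huS (J ∪ u.support)
    have hygen : C.Gen (J ∪ u.support) y := C.gen_of_forall_single hyN hygen'
    exact ⟨y, hyN, huyS, C.gen_mono Finset.subset_union_left hygen⟩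

/-- Collapse of a chain of three `S`-sums. -/
lemma key {p q s t : ι →₀ ℤ} (hp : p ∈ C.NR) (hq : q ∈ C.NR) (hs : s ∈ C.NR)
    (ht : t ∈ C.NR) (hpq : p + q ∈ C.S) (hqs : q + s ∈ C.S) (hst : s + t ∈ C.S)
    (cps : C.Compat p s) (cpt : C.Compat p t) (cqt : C.Compat q t) :
    p + t ∈ C.S := by
  have cqs : C.Compat q s := C.compat_of_NR_add hq hs (C.h1 hqs)
  have cst : C.Compat s t := C.compat_of_NR_add hs ht (C.h1 hst)
  have hCtot : C.Compat (p + q) (s + t) :=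
    C.compat_add_left (C.compat_add_right cps cpt) (C.compat_add_right cqs cqt)
  have hTN : (p + q) + (s + t) ∈ C.NR :=
    C.NR_add (C.h1 hpq) (C.h1 hst) hCtot
  have hTS : (p + q) + (s + t) ∈ C.S := C.S_add hpq hst hCtot
  have hptN : p + t ∈ C.NR := C.NR_add hp ht cpt
  have heq : (p + q) + (s + t) = (q + s) + (p + t) := by abel
  rw [heq] at hTS
  exact C.S_cancel hptN hqs hTS

/-- Two nicely reduced elements are similar if they admit a common complement. -/
def SIM (u v : ι →₀ ℤ) : Prop :=
  u ∈ C.NR ∧ v ∈ C.NR ∧ ∃ w, w ∈ C.NR ∧ u + w ∈ C.S ∧ v + w ∈ C.S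

lemma sim_refl {u : ι →₀ ℤ} (hu : u ∈ C.NR) : C.SIM u u := by
  obtain ⟨w, hwN, huwS, -⟩ := C.move hu ∅
  exact ⟨hu, hu, w, hwN, huwS, huwS⟩

lemma sim_symm {u v : ι →₀ ℤ} (h : C.SIM u v) : C.SIM v u :=
  ⟨h.2.1, h.1, h.2.2.imp fun w ⟨hw, h1, h2⟩ => ⟨hw, h2, h1⟩⟩

/-- The common complement can be chosen generic over any finite set. -/
lemma upgrade {u v : ι →₀ ℤ} (h : C.SIM u v) (J : Finset ι) :
    ∃ w, w ∈ C.NR ∧ C.Gen J w ∧ u + w ∈ C.S ∧ v + w ∈ C.S := by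
  obtain ⟨hu, hv, w₀, hw₀N, huw₀, hvw₀⟩ := h
  set J₁ := J ∪ u.support ∪ v.support ∪ w₀.support with hJ₁
  obtain ⟨s, hsN, hw₀s, hgs⟩ := C.move hw₀N J₁
  obtain ⟨t, htN, hst, hgt⟩ := C.move hsN (J₁ ∪ s.support)
  have hsubJ : J ⊆ J₁ := by
    intro a ha; simp [hJ₁, Finset.mem_union, ha]
  have hsubu : u.support ⊆ J₁ := by
    intro a ha; simp [hJ₁, Finset.mem_union, ha]
  have hsubv : v.support ⊆ J₁ := by
    intro a ha; simp [hJ₁, Finset.mem_union, ha]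
  have hsubw₀ : w₀.support ⊆ J₁ := by
    intro a ha; simp [hJ₁, Finset.mem_union, ha]
  have hsubJ' : J₁ ⊆ J₁ ∪ s.support := Finset.subset_union_left
  have cus : C.Compat u s := C.compat_of_gen hgs hsubu
  have cut : C.Compat u t := C.compat_of_gen hgt (hsubu.trans hsubJ')
  have cvs : C.Compat v s := C.compat_of_gen hgs hsubv
  have cvt : C.Compat v t := C.compat_of_gen hgt (hsubv.trans hsubJ')
  have cw₀t : C.Compat w₀ t := C.compat_of_gen hgt (hsubw₀.trans hsubJ')
  refine ⟨t, htN, C.gen_mono (hsubJ.trans hsubJ') hgt, ?_, ?_⟩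
  · exact C.key hu hw₀N hsN htN huw₀ hw₀s hst cus cut cw₀t
  · exact C.key hv hw₀N hsN htN hvw₀ hw₀s hst cvs cvt cw₀t

lemma sim_trans {u v τ : ι →₀ ℤ} (h₁ : C.SIM u v) (h₂ : C.SIM v τ) :
    C.SIM u τ := by
  have hu := h₁.1
  have hv := h₁.2.1
  have hτ := h₂.2.1
  obtain ⟨z₁, hz₁N, hgz₁, huz₁, hvz₁⟩ :=
    C.upgrade h₁ (u.support ∪ v.support ∪ τ.support)
  obtain ⟨z₂, hz₂N, hgz₂, hvz₂, hτz₂⟩ :=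
    C.upgrade h₂ (u.support ∪ v.support ∪ τ.support ∪ z₁.support)
  have h₃ : C.SIM z₁ z₂ :=
    ⟨hz₁N, hz₂N, v, hv, by rwa [add_comm], by rwa [add_comm]⟩
  obtain ⟨ζ, hζN, hgζ, hz₁ζ, hz₂ζ⟩ :=
    C.upgrade h₃ (u.support ∪ z₁.support ∪ z₂.support)
  have hsubu : u.support ⊆ u.support ∪ z₁.support ∪ z₂.support := by
    intro a ha; simp [Finset.mem_union, ha]
  have hsubu' : u.support ⊆ u.support ∪ v.support ∪ τ.support ∪ z₁.support := by
    intro a ha; simp [Finset.mem_union, ha]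
  have hsubz₁ : z₁.support ⊆ u.support ∪ v.support ∪ τ.support ∪ z₁.support := by
    intro a ha; simp [Finset.mem_union, ha]
  have cuζ : C.Compat u ζ := C.compat_of_gen hgζ hsubu
  have cuz₂ : C.Compat u z₂ := C.compat_of_gen hgz₂ hsubu'
  have cz₁z₂ : C.Compat z₁ z₂ := C.compat_of_gen hgz₂ hsubz₁
  have huz₂ : u + z₂ ∈ C.S :=
    C.key hu hz₁N hζN hz₂N huz₁ hz₁ζ (by rwa [add_comm]) cuζ cuz₂ cz₁z₂
  exact ⟨hu, hτ, z₂, hz₂N, huz₂, hτz₂⟩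

lemma sim0_of_S {x : ι →₀ ℤ} (hx : x ∈ C.S) : C.SIM x 0 := by
  obtain ⟨w, hwN, hxwS, -⟩ := C.move (C.h1 hx) ∅
  exact ⟨C.h1 hx, C.NR_zero, w, hwN, hxwS,
    by rw [zero_add]; exact C.S_cancel hwN hx hxwS⟩

lemma S_of_sim0 {x : ι →₀ ℤ} (h : C.SIM x 0) : x ∈ C.S := by
  obtain ⟨hxN, -, w, hwN, hxwS, h0wS⟩ := h
  rw [zero_add] at h0wS
  exact C.S_cancel' hxN h0wS hxwS

lemma sim_add {u u' v v' : ι →₀ ℤ} (h : C.SIM u u') (h' : C.SIM v v')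
    (hn : u + v ∈ C.NR) (hn' : u' + v' ∈ C.NR) :
    C.SIM (u + v) (u' + v') := by
  have hu := h.1
  have hu' := h.2.1
  have hv := h'.1
  have hv' := h'.2.1
  set J₁ := u.support ∪ u'.support ∪ v.support ∪ v'.support with hJ₁
  obtain ⟨a, haN, hga, hua, hu'a⟩ := C.upgrade h J₁
  obtain ⟨b, hbN, hgb, hvb, hv'b⟩ := C.upgrade h' (J₁ ∪ a.support)
  have hsubu : u.support ⊆ J₁ := by
    intro z hz; simp [hJ₁, Finset.mem_union, hz]
  have hsubu' : u'.support ⊆ J₁ := by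
    intro z hz; simp [hJ₁, Finset.mem_union, hz]
  have hsubv : v.support ⊆ J₁ := by
    intro z hz; simp [hJ₁, Finset.mem_union, hz]
  have hsubv' : v'.support ⊆ J₁ := by
    intro z hz; simp [hJ₁, Finset.mem_union, hz]
  have hsuba : a.support ⊆ J₁ ∪ a.support := Finset.subset_union_right
  have hJsub : J₁ ⊆ J₁ ∪ a.support := Finset.subset_union_left
  have cab : C.Compat a b := C.compat_of_gen hgb hsuba
  have cub : C.Compat u b := C.compat_of_gen hgb (hsubu.trans hJsub)
  have cu'b : C.Compat u' b := C.compat_of_gen hgb (hsubu'.trans hJsub)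
  have cav : C.Compat a v := C.compat_symm (C.compat_of_gen hga hsubv)
  have cav' : C.Compat a v' := C.compat_symm (C.compat_of_gen hga hsubv')
  have habN : a + b ∈ C.NR := C.NR_add haN hbN cab
  have key1 : (u + a) + (v + b) ∈ C.S := by
    apply C.S_add hua hvb
    exact C.compat_add_left
      (C.compat_add_right (C.compat_of_NR_add hu hv hn) cub)
      (C.compat_add_right cav cab)
  have key2 : (u' + a) + (v' + b) ∈ C.S := by
    apply C.S_add hu'a hv'b
    exact C.compat_add_left
      (C.compat_add_right (C.compat_of_NR_add hu' hv' hn') cu'b)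
      (C.compat_add_right cav' cab)
  rw [add_add_add_comm] at key1 key2
  exact ⟨hn, hn', a + b, habN, key1, key2⟩

/-! ### The quotient group -/

def NRt := {x : ι →₀ ℤ // x ∈ C.NR}

instance simSetoid : Setoid C.NRt :=
  ⟨fun u v => C.SIM u.1 v.1,
   fun u => C.sim_refl u.2,
   fun h => C.sim_symm h,
   fun h h' => C.sim_trans h h'⟩

def A := Quotient C.simSetoid

def mkA (u : C.NRt) : C.A := Quotient.mk C.simSetoid u

lemma mkA_eq {u v : C.NRt} (h : C.SIM u.1 v.1) : C.mkA u = C.mkA v :=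
  Quotient.sound h

lemma exists_gen_rep (u : C.NRt) (J : Finset ι) :
    ∃ u' : C.NRt, C.SIM u.1 u'.1 ∧ C.Gen J u'.1 := by
  obtain ⟨w, hwN, huw, -⟩ := C.move u.2 J
  obtain ⟨u', hu'N, hwu', hgu'⟩ := C.move hwN J
  refine ⟨⟨u', hu'N⟩, ⟨u.2, hu'N, w, hwN, huw, by rwa [add_comm]⟩, hgu'⟩

noncomputable def genRep (u : C.NRt) (J : Finset ι) : C.NRt :=
  (C.exists_gen_rep u J).choose

lemma genRep_sim (u : C.NRt) (J : Finset ι) : C.SIM u.1 (C.genRep u J).1 :=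
  (C.exists_gen_rep u J).choose_spec.1

lemma genRep_gen (u : C.NRt) (J : Finset ι) : C.Gen J (C.genRep u J).1 :=
  (C.exists_gen_rep u J).choose_spec.2

lemma genRep_compat (u : C.NRt) (v : ι →₀ ℤ) :
    C.Compat (C.genRep u v.support).1 v :=
  C.compat_symm (C.compat_of_gen (C.genRep_gen u v.support) (le_refl _))

noncomputable def rawAdd (u v : C.NRt) : C.A :=
  C.mkA ⟨(C.genRep u v.1.support).1 + v.1,
    C.NR_add (C.genRep u v.1.support).2 v.2 (C.genRep_compat u v.1)⟩

lemma rawAdd_sound (u₁ v₁ u₂ v₂ : C.NRt) (hu : C.SIM u₁.1 u₂.1)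
    (hv : C.SIM v₁.1 v₂.1) : C.rawAdd u₁ v₁ = C.rawAdd u₂ v₂ := by
  apply C.mkA_eq
  exact C.sim_add
    (C.sim_trans (C.sim_trans (C.sim_symm (C.genRep_sim u₁ v₁.1.support)) hu)
      (C.genRep_sim u₂ v₂.1.support))
    hv
    (C.NR_add (C.genRep u₁ v₁.1.support).2 v₁.2 (C.genRep_compat u₁ v₁.1))
    (C.NR_add (C.genRep u₂ v₂.1.support).2 v₂.2 (C.genRep_compat u₂ v₂.1))

noncomputable def addA : C.A → C.A → C.A :=
  Quotient.lift₂ C.rawAdd (fun u₁ v₁ u₂ v₂ hu hv => C.rawAdd_sound u₁ v₁ u₂ v₂ hu hv)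

lemma addA_mk (u v : C.NRt) (h : C.Compat u.1 v.1) :
    C.addA (C.mkA u) (C.mkA v) = C.mkA ⟨u.1 + v.1, C.NR_add u.2 v.2 h⟩ := by
  apply C.mkA_eq
  exact C.sim_add (C.sim_symm (C.genRep_sim u v.1.support)) (C.sim_refl v.2)
    (C.NR_add (C.genRep u v.1.support).2 v.2 (C.genRep_compat u v.1))
    (C.NR_add u.2 v.2 h)

lemma exists_inv (u : C.NRt) : ∃ w : C.NRt, u.1 + w.1 ∈ C.S := by
  obtain ⟨w, hwN, huw, -⟩ := C.move u.2 ∅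
  exact ⟨⟨w, hwN⟩, huw⟩

noncomputable def invRep (u : C.NRt) : C.NRt := (C.exists_inv u).choose

lemma invRep_spec (u : C.NRt) : u.1 + (C.invRep u).1 ∈ C.S :=
  (C.exists_inv u).choose_spec

noncomputable def rawNeg (u : C.NRt) : C.A := C.mkA (C.invRep u)

lemma rawNeg_sound (u v : C.NRt) (h : C.SIM u.1 v.1) : C.rawNeg u = C.rawNeg v := by
  apply C.mkA_eq
  set wu := C.invRep u with hwu
  set wv := C.invRep v with hwv
  have huwu := C.invRep_spec u
  have hvwv := C.invRep_spec v
  obtain ⟨z, hzN, hgz, huz, hvz⟩ :=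
    C.upgrade h (u.1.support ∪ v.1.support ∪ wu.1.support ∪ wv.1.support)
  obtain ⟨t, htN, hzt, hgt⟩ :=
    C.move hzN (u.1.support ∪ v.1.support ∪ wu.1.support ∪ wv.1.support ∪ z.support)
  have hsub : ∀ y : ι →₀ ℤ, y.support ⊆ u.1.support ∪ v.1.support ∪
      wu.1.support ∪ wv.1.support ∪ z.support →
      C.Compat y t := fun y hy => C.compat_of_gen hgt hy
  have memsub : ∀ a, a ∈ wu.1.support →
      a ∈ u.1.support ∪ v.1.support ∪ wu.1.support ∪ wv.1.support := by
    intro a ha; simp [Finset.mem_union, ha]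
  have memsub' : ∀ a, a ∈ wv.1.support →
      a ∈ u.1.support ∪ v.1.support ∪ wu.1.support ∪ wv.1.support := by
    intro a ha; simp [Finset.mem_union, ha]
  have memsubu : ∀ a, a ∈ u.1.support →
      a ∈ u.1.support ∪ v.1.support ∪ wu.1.support ∪ wv.1.support ∪ z.support := by
    intro a ha; simp [Finset.mem_union, ha]
  have memsubv : ∀ a, a ∈ v.1.support →
      a ∈ u.1.support ∪ v.1.support ∪ wu.1.support ∪ wv.1.support ∪ z.support := by
    intro a ha; simp [Finset.mem_union, ha]
  have memsubwu : ∀ a, a ∈ wu.1.support →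
      a ∈ u.1.support ∪ v.1.support ∪ wu.1.support ∪ wv.1.support ∪ z.support := by
    intro a ha; simp [Finset.mem_union, ha]
  have memsubwv : ∀ a, a ∈ wv.1.support →
      a ∈ u.1.support ∪ v.1.support ∪ wu.1.support ∪ wv.1.support ∪ z.support := by
    intro a ha; simp [Finset.mem_union, ha]
  have cwuz : C.Compat wu.1 z := C.compat_of_gen hgz memsub
  have cwvz : C.Compat wv.1 z := C.compat_of_gen hgz memsub'
  have cwut : C.Compat wu.1 t := hsub _ memsubwu
  have cwvt : C.Compat wv.1 t := hsub _ memsubwv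
  have cut : C.Compat u.1 t := hsub _ memsubu
  have cvt : C.Compat v.1 t := hsub _ memsubv
  have hwut : wu.1 + t ∈ C.S :=
    C.key wu.2 u.2 hzN htN (by rwa [add_comm]) huz hzt cwuz cwut cut
  have hwvt : wv.1 + t ∈ C.S :=
    C.key wv.2 v.2 hzN htN (by rwa [add_comm]) hvz hzt cwvz cwvt cvt
  exact ⟨wu.2, wv.2, t, htN, hwut, hwvt⟩

noncomputable def negA : C.A → C.A :=
  Quotient.lift C.rawNeg (fun u v h => C.rawNeg_sound u v h)

def zeroA : C.A := C.mkA ⟨0, C.NR_zero⟩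

lemma exists_triple (u v w : C.NRt) :
    ∃ u' v' w' : C.NRt, C.SIM u.1 u'.1 ∧ C.SIM v.1 v'.1 ∧ C.SIM w.1 w'.1 ∧
      C.Compat u'.1 v'.1 ∧ C.Compat u'.1 w'.1 ∧ C.Compat v'.1 w'.1 := by
  obtain ⟨u', hsu, -⟩ := C.exists_gen_rep u ∅
  obtain ⟨v', hsv, hgv'⟩ := C.exists_gen_rep v u'.1.support
  obtain ⟨w', hsw, hgw'⟩ := C.exists_gen_rep w (u'.1.support ∪ v'.1.support)
  refine ⟨u', v', w', hsu, hsv, hsw, ?_, ?_, ?_⟩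
  · exact C.compat_of_gen hgv' (le_refl _)
  · exact C.compat_of_gen hgw' Finset.subset_union_left
  · exact C.compat_of_gen hgw' Finset.subset_union_right

lemma addA_assoc (a b c : C.A) : C.addA (C.addA a b) c = C.addA a (C.addA b c) := by
  induction a, b, c using Quotient.inductionOn₃ with
  | h u v w =>
    obtain ⟨u', v', w', hsu, hsv, hsw, cuv, cuw, cvw⟩ := C.exists_triple u v w
    show C.addA (C.addA (C.mkA u) (C.mkA v)) (C.mkA w)
      = C.addA (C.mkA u) (C.addA (C.mkA v) (C.mkA w))
    rw [C.mkA_eq hsu, C.mkA_eq hsv, C.mkA_eq hsw]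
    rw [C.addA_mk u' v' cuv, C.addA_mk v' w' cvw]
    rw [C.addA_mk ⟨u'.1 + v'.1, C.NR_add u'.2 v'.2 cuv⟩ w' (C.compat_add_left cuw cvw),
      C.addA_mk u' ⟨v'.1 + w'.1, C.NR_add v'.2 w'.2 cvw⟩ (C.compat_add_right cuv cuw)]
    apply congrArg
    exact Subtype.ext (add_assoc u'.1 v'.1 w'.1)

lemma addA_comm (a b : C.A) : C.addA a b = C.addA b a := by
  induction a, b using Quotient.inductionOn₂ with
  | h u v =>
    obtain ⟨u', v', w', hsu, hsv, -, cuv, -, -⟩ := C.exists_triple u v v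
    show C.addA (C.mkA u) (C.mkA v) = C.addA (C.mkA v) (C.mkA u)
    rw [C.mkA_eq hsu, C.mkA_eq hsv]
    rw [C.addA_mk u' v' cuv, C.addA_mk v' u' (C.compat_symm cuv)]
    apply congrArg
    exact Subtype.ext (add_comm u'.1 v'.1)

lemma addA_zero (a : C.A) : C.addA a C.zeroA = a := by
  induction a using Quotient.inductionOn with
  | h u =>
    show C.addA (C.mkA u) (C.mkA ⟨0, C.NR_zero⟩) = C.mkA u
    rw [C.addA_mk u ⟨0, C.NR_zero⟩ (C.compat_zero_right u.1)]
    apply congrArg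
    exact Subtype.ext (add_zero u.1)

lemma zeroA_add (a : C.A) : C.addA C.zeroA a = a := by
  induction a using Quotient.inductionOn with
  | h u =>
    show C.addA (C.mkA ⟨0, C.NR_zero⟩) (C.mkA u) = C.mkA u
    rw [C.addA_mk ⟨0, C.NR_zero⟩ u (C.compat_zero_left u.1)]
    apply congrArg
    exact Subtype.ext (zero_add u.1)

lemma negA_add_cancel (a : C.A) : C.addA (C.negA a) a = C.zeroA := by
  induction a using Quotient.inductionOn with
  | h u =>
    have hspec := C.invRep_spec u
    have hcompat : C.Compat (C.invRep u).1 u.1 :=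
      C.compat_symm (C.compat_of_NR_add u.2 (C.invRep u).2 (C.h1 hspec))
    show C.addA (C.mkA (C.invRep u)) (C.mkA u) = C.zeroA
    rw [C.addA_mk _ u hcompat]
    apply C.mkA_eq
    apply C.sim0_of_S
    show (C.invRep u).1 + u.1 ∈ C.S
    rwa [add_comm]

noncomputable instance : Zero C.A := ⟨C.zeroA⟩
noncomputable instance : Add C.A := ⟨C.addA⟩
noncomputable instance : Neg C.A := ⟨C.negA⟩

noncomputable instance : AddCommGroup C.A where
  add_assoc := C.addA_assoc
  zero_add := C.zeroA_add
  add_zero := C.addA_zero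
  nsmul := nsmulRec
  zsmul := zsmulRec
  neg_add_cancel := C.negA_add_cancel
  add_comm := C.addA_comm

lemma addA_eq_add (a b : C.A) : C.addA a b = a + b := rfl

lemma zeroA_eq_zero : C.zeroA = (0 : C.A) := rfl

noncomputable def phi : (ι →₀ ℤ) →+ C.A :=
  Finsupp.liftAddHom fun i => zmultiplesHom C.A (C.mkA ⟨Finsupp.single i 1, C.NR_single i⟩)

lemma phi_single (i : ι) :
    C.phi (Finsupp.single i 1) = C.mkA ⟨Finsupp.single i 1, C.NR_single i⟩ := by
  simp only [phi]
  rw [Finsupp.liftAddHom_apply_single, zmultiplesHom_apply, one_zsmul]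

lemma phi_NR (x : ι →₀ ℤ) (hx : x ∈ C.NR) : C.phi x = C.mkA ⟨x, hx⟩ := by
  have H : ∀ n : ℕ, ∀ x : ι →₀ ℤ, ∀ hx : x ∈ C.NR, x.support.card = n →
      C.phi x = C.mkA ⟨x, hx⟩ := by
    intro n
    induction n with
    | zero =>
      intro x hx hcard
      have hx0 : x = 0 := by
        rwa [Finset.card_eq_zero, Finsupp.support_eq_empty] at hcard
      subst hx0
      rw [map_zero]
      rfl
    | succ n IH =>
      intro x hx hcard
      have hne : x.support.Nonempty := by
        rw [← Finset.card_pos, hcard]; omega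
      obtain ⟨i, hi⟩ := hne
      have hxi : x i = 1 :=
        (C.NR_coord hx i).resolve_left (Finsupp.mem_support_iff.1 hi)
      have h0 : Finsupp.single i (x i) + x.erase i = x := Finsupp.single_add_erase i x
      rw [hxi] at h0
      have heraseN : x.erase i ∈ C.NR := by
        rw [mem_NR_iff]
        constructor
        · intro j
          by_cases hji : j = i
          · subst hji; rw [Finsupp.erase_same]; exact Or.inl rfl
          · rw [Finsupp.erase_ne hji]; exact C.NR_coord hx j
        · intro a b hab ha hb
          by_cases hai : a = i
          · subst hai; rw [Finsupp.erase_same] at ha; exact absurd rfl ha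
          · by_cases hbi : b = i
            · subst hbi; rw [Finsupp.erase_same] at hb; exact absurd rfl hb
            · rw [Finsupp.erase_ne hai] at ha
              rw [Finsupp.erase_ne hbi] at hb
              exact C.NR_pair hx a b hab ha hb
      have hcard' : (x.erase i).support.card = n := by
        rw [Finsupp.support_erase, Finset.card_erase_of_mem hi, hcard]
        omega
      have hcompat : C.Compat (Finsupp.single i 1) (x.erase i) := by
        intro a b ha hb
        have hai : a = i := by
          by_contra hne'
          rw [Finsupp.single_apply, if_neg (fun h => hne' h.symm)] at ha
          exact ha rfl
        subst hai
        have hbne : b ≠ a := by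
          intro h; subst h; rw [Finsupp.erase_same] at hb; exact hb rfl
        have hxb : x b ≠ 0 := by rwa [Finsupp.erase_ne hbne] at hb
        have hxa : x a ≠ 0 := by rw [hxi]; omega
        exact C.NR_pair hx a b (fun h => hbne h.symm) hxa hxb
      calc C.phi x = C.phi (Finsupp.single i 1 + x.erase i) := by rw [h0]
        _ = C.phi (Finsupp.single i 1) + C.phi (x.erase i) := map_add _ _ _
        _ = C.mkA ⟨Finsupp.single i 1, C.NR_single i⟩ + C.mkA ⟨x.erase i, heraseN⟩ := by
              rw [C.phi_single i, IH _ heraseN hcard']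
        _ = C.addA (C.mkA ⟨Finsupp.single i 1, C.NR_single i⟩)
              (C.mkA ⟨x.erase i, heraseN⟩) := rfl
        _ = C.mkA ⟨Finsupp.single i 1 + x.erase i,
              C.NR_add (C.NR_single i) heraseN hcompat⟩ := C.addA_mk _ _ hcompat
        _ = C.mkA ⟨x, hx⟩ := by
              apply congrArg
              exact Subtype.ext h0
  exact H x.support.card x hx rfl

lemma phi_S {s : ι →₀ ℤ} (hs : s ∈ C.S) : C.phi s = 0 := by
  rw [C.phi_NR s (C.h1 hs), ← C.zeroA_eq_zero]
  exact C.mkA_eq (C.sim0_of_S hs)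

theorem main (x : ι →₀ ℤ) (hx : x ∈ AddSubgroup.closure C.S) (hxNR : x ∈ C.NR) :
    x ∈ C.S := by
  have hker : AddSubgroup.closure C.S ≤ (C.phi).ker :=
    (AddSubgroup.closure_le _).2 (fun s hs => C.phi_S hs)
  have h0 : C.phi x = 0 := hker hx
  rw [C.phi_NR x hxNR, ← C.zeroA_eq_zero] at h0
  exact C.S_of_sim0 (Quotient.exact h0)

end Ctx

end EulerClassAux

/-- The combinatorial lemma underlying vanishing criteria in Euler class group
theory. `G = ι →₀ ℤ` is the free abelian group on `ι`, `r` is an equivalence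
relation on the basis, `NR` is the set of "nicely reduced" elements (sums of
distinct pairwise inequivalent basis elements), and `S` satisfies the three
listed conditions. Then every nicely reduced element of the subgroup generated
by `S` lies in `S`. -/
theorem nicely_reduced_in_S {ι : Type} (r : ι → ι → Prop) (hr : Equivalence r)
    (S NR : Set (ι →₀ ℤ))
    (hNR : ∀ x, x ∈ NR ↔ ∃ s : Finset ι,
      x = ∑ i ∈ s, Finsupp.single i 1 ∧
      ∀ i ∈ s, ∀ j ∈ s, i ≠ j → ¬ r i j)
    (h1 : S ⊆ NR)
    (h2 : ∀ x y, x ∈ NR → y ∈ NR → x + y ∈ NR →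
      ((x ∈ S ∧ y ∈ S) → x + y ∈ S) ∧
      ((x ∈ S ∧ x + y ∈ S) → y ∈ S) ∧
      ((y ∈ S ∧ x + y ∈ S) → x ∈ S))
    (h3 : ∀ x ∈ NR, x ∉ S → ∀ J : Finset ι,
      ∃ y ∈ NR, x + y ∈ S ∧ ∀ j ∈ J, y + Finsupp.single j 1 ∈ NR)
    (x : ι →₀ ℤ) (hx : x ∈ AddSubgroup.closure S) (hxNR : x ∈ NR) :
    x ∈ S :=
  EulerClassAux.Ctx.main ⟨r, hr, S, NR, hNR, h1, h2, h3⟩ x hx hxNR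
end

section
/- Let R be a commutative Noetherian ring of dimension d, J ⊆ R an ideal of height d generated modulo J² by b₁,…,b_d, and suppose J = (c₁,…,c_d) with b_i ≡ c_i mod J². Then there exist λ₁,…,λ_{d-1} ∈ R such that, setting c'_i = c_i + λ_i c_d for i < d, one has dim(R/(c'₁,…,c'_{d-1})) ≤ 1 and J = (c'₁,…,c'_{d-1}, c_d) with b_i + λ_i b_d ≡ c'_i mod J². -/
/-- Prime avoidance for a coset `a + (b)`: if `b` lies outside each member of a
finite set of primes, then some `a + t * b` avoids all of them. -/
lemma avoid_lemma {R : Type} [CommRing R] (a b : R) :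
    ∀ S : Finset (Ideal R), (∀ p ∈ S, p.IsPrime) → (∀ p ∈ S, b ∉ p) →
      ∃ t : R, ∀ p ∈ S, a + t * b ∉ p := by
  classical
  intro S
  induction S using Finset.strongInduction with
  | _ S ih =>
    intro hS hb
    rcases S.eq_empty_or_nonempty with rfl | hne
    · exact ⟨0, by simp⟩
    obtain ⟨p, hp, hmin⟩ := S.exists_minimal hne
    obtain ⟨t, ht⟩ := ih (S.erase p) (Finset.erase_ssubset hp)
      (fun q hq => hS q (Finset.mem_of_mem_erase hq))
      (fun q hq => hb q (Finset.mem_of_mem_erase hq))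
    by_cases hcase : a + t * b ∈ p
    · have hnle : ¬ ((S.erase p).inf id ≤ p) := by
        intro hle
        obtain ⟨q, hq, hqle⟩ := ((hS p hp).inf_le').mp hle
        exact Finset.ne_of_mem_erase hq
          (le_antisymm hqle (hmin (Finset.mem_of_mem_erase hq) hqle))
      obtain ⟨u, hu, hup⟩ := SetLike.not_le_iff_exists.mp hnle
      refine ⟨t + u, fun q hq hmem => ?_⟩
      rcases eq_or_ne q p with rfl | hne'
      · have h2 : u * b ∈ q := by
          have h3 := q.sub_mem hmem hcase
          have h4 : a + (t + u) * b - (a + t * b) = u * b := by ring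
          rwa [h4] at h3
        exact ((hS q hp).mem_or_mem h2).elim hup (hb q hp)
      · have hq' : q ∈ S.erase p := Finset.mem_erase.mpr ⟨hne', hq⟩
        apply ht q hq'
        have hub : u * b ∈ q := Ideal.mul_mem_right b q ((Finset.inf_le hq' : _ ≤ id q) hu)
        have h3 := q.sub_mem hmem hub
        have h4 : a + (t + u) * b - u * b = a + t * b := by ring
        rwa [h4] at h3
    · refine ⟨t, fun q hq => ?_⟩
      rcases eq_or_ne q p with rfl | hne'
      · exact hcase
      · exact ht q (Finset.mem_erase.mpr ⟨hne', hq⟩)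

/-- A Noetherian ring has finitely many minimal primes over any ideal. -/
lemma minPrimes_finite {R : Type} [CommRing R] [IsNoetherianRing R] (I : Ideal R) :
    I.minimalPrimes.Finite := by
  rw [Ideal.minimalPrimes_eq_comap]
  exact (minimalPrimes.finite_of_isNoetherianRing (R ⧸ I)).image _

lemma range_snoc' {k : ℕ} {R : Type} (g : Fin k → R) (x : R) :
    Set.range (Fin.snoc g x : Fin (k + 1) → R) = insert x (Set.range g) := by
  ext y
  constructor
  · rintro ⟨i, rfl⟩
    induction i using Fin.lastCases with
    | last => left; simp
    | cast j => right; exact ⟨j, by simp⟩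
  · rintro (rfl | ⟨j, rfl⟩)
    · exact ⟨Fin.last k, by simp⟩
    · exact ⟨j.castSucc, by simp⟩

/-- The inductive heart of general position: modified generators can be chosen so
that every minimal prime over the partial ideal not containing the last generator
has height at least `k`. -/
lemma key {R : Type} [CommRing R] [IsNoetherianRing R] (n : ℕ)
    (hdim : ringKrullDim R = ((n + 1 : ℕ) : WithBot ℕ∞))
    (c : Fin (n + 1) → R) :
    ∀ k, (hk : k ≤ n) → ∃ lam : Fin k → R,
      ∀ q (hq : q ∈ (Ideal.span (Set.range fun i : Fin k =>
          c (Fin.castLE (Nat.le_succ_of_le hk) i) + lam i * c (Fin.last n))).minimalPrimes),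
        c (Fin.last n) ∉ q → (k : ℕ∞) ≤ Order.height (⟨q, hq.1.1⟩ : PrimeSpectrum R) := by
  have hhtle : ∀ x : PrimeSpectrum R, Order.height x ≤ ((n + 1 : ℕ) : ℕ∞) := by
    intro x
    have h := Order.height_le_krullDim x
    rw [show Order.krullDim (PrimeSpectrum R) = ringKrullDim R from rfl, hdim] at h
    exact_mod_cast h
  intro k
  induction k with
  | zero =>
    intro hk
    exact ⟨Fin.elim0, fun q hq _ => by simp⟩
  | succ k ih =>
    intro hk
    obtain ⟨lam, hlam⟩ := ih (Nat.le_of_succ_le hk)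
    classical
    set g : Fin k → R := fun i =>
      c (Fin.castLE (Nat.le_succ_of_le (Nat.le_of_succ_le hk)) i) + lam i * c (Fin.last n) with hg
    set I : Ideal R := Ideal.span (Set.range g) with hI
    have hfin : {q | q ∈ I.minimalPrimes ∧ c (Fin.last n) ∉ q}.Finite :=
      (minPrimes_finite I).subset (fun q hq => hq.1)
    set a : R := c (Fin.castLE (Nat.le_succ_of_le hk) (Fin.last k)) with ha
    obtain ⟨t, ht⟩ := avoid_lemma a (c (Fin.last n)) hfin.toFinset
      (fun p hp => ((hfin.mem_toFinset.mp hp).1).1.1)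
      (fun p hp => (hfin.mem_toFinset.mp hp).2)
    refine ⟨Fin.snoc lam t, ?_⟩
    have hfun : (fun i : Fin (k + 1) =>
        c (Fin.castLE (Nat.le_succ_of_le hk) i)
          + (Fin.snoc lam t : Fin (k+1) → R) i * c (Fin.last n))
        = Fin.snoc g (a + t * c (Fin.last n)) := by
      funext i
      induction i using Fin.lastCases with
      | last => simp [ha]
      | cast j =>
        have h1 : Fin.castLE (Nat.le_succ_of_le hk) (Fin.castSucc j)
            = Fin.castLE (Nat.le_succ_of_le (Nat.le_of_succ_le hk)) j := rfl
        simp [h1, hg]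
    intro q hq hlast
    rw [hfun, range_snoc', Ideal.span_insert] at hq
    have hIq : I ≤ q := le_sup_right.trans hq.1.2
    have hnewq : a + t * c (Fin.last n) ∈ q :=
      (le_sup_left.trans hq.1.2 : Ideal.span {a + t * c (Fin.last n)} ≤ q)
        (Ideal.subset_span rfl)
    haveI : q.IsPrime := hq.1.1
    obtain ⟨p, hp, hpq⟩ := Ideal.exists_minimalPrimes_le hIq
    have hplast : c (Fin.last n) ∉ p := fun h => hlast (hpq h)
    have hpS : p ∈ hfin.toFinset := hfin.mem_toFinset.mpr ⟨hp, hplast⟩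
    have hpnew : a + t * c (Fin.last n) ∉ p := ht p hpS
    have hplt : p < q := lt_of_le_of_ne hpq (by rintro rfl; exact hpnew hnewq)
    have h1 : (k : ℕ∞) ≤ Order.height (⟨p, hp.1.1⟩ : PrimeSpectrum R) := hlam p hp hplast
    have h2 : Order.height (⟨p, hp.1.1⟩ : PrimeSpectrum R)
        < Order.height (⟨q, hq.1.1⟩ : PrimeSpectrum R) := by
      apply Order.height_strictMono
      · exact hplt
      · exact lt_of_le_of_lt (hhtle _) (by exact_mod_cast ENat.coe_lt_top _)
    have hlt : (k : ℕ∞) < Order.height (⟨q, hq.1.1⟩ : PrimeSpectrum R) := lt_of_le_of_lt h1 h2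
    have h3 : (k : ℕ∞) + 1 ≤ Order.height (⟨q, hq.1.1⟩ : PrimeSpectrum R) :=
      (ENat.add_one_le_iff (ENat.coe_ne_top k)).mpr hlt
    exact_mod_cast h3

/-- General position: if `J = (c₁, …, c_d)` has height `d = dim R` and
`b_i ≡ c_i mod J²` generate `J` modulo `J²`, then adding suitable multiples of
the last generator to the others one may assume that the first `d - 1` modified
generators `c'_i = c_i + λ_i c_d` generate an ideal with `dim R/(c'₁,…,c'_{d-1}) ≤ 1`,
while `J = (c'₁, …, c'_{d-1}, c_d)` and `b_i + λ_i b_d ≡ c'_i mod J²`. -/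
theorem general_position {R : Type} [CommRing R] [IsNoetherianRing R]
    (n : ℕ) (hdim : ringKrullDim R = (n + 1 : ℕ))
    (J : Ideal R) (hht : idealHeight J = (n + 1 : ℕ))
    (b c : Fin (n + 1) → R)
    (hbJ : ∀ i, b i ∈ J)
    (hbgen : J = Ideal.span (Set.range b) ⊔ J ^ 2)
    (hc : J = Ideal.span (Set.range c))
    (hbc : ∀ i, b i - c i ∈ J ^ 2) :
    ∃ lam : Fin n → R,
      ringKrullDim (R ⧸ Ideal.span
        (Set.range (fun i : Fin n => c i.castSucc + lam i * c (Fin.last n)))) ≤ 1 ∧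
      J = Ideal.span (insert (c (Fin.last n))
        (Set.range (fun i : Fin n => c i.castSucc + lam i * c (Fin.last n)))) ∧
      ∀ i : Fin n,
        (b i.castSucc + lam i * b (Fin.last n)) -
          (c i.castSucc + lam i * c (Fin.last n)) ∈ J ^ 2 := by
  obtain ⟨lam, hlam⟩ := key n hdim c n le_rfl
  have hfun : (fun i : Fin n => c (Fin.castLE (Nat.le_succ_of_le le_rfl) i)
      + lam i * c (Fin.last n)) = fun i : Fin n => c i.castSucc + lam i * c (Fin.last n) := rfl
  rw [hfun] at hlam
  set I : Ideal R :=
    Ideal.span (Set.range fun i : Fin n => c i.castSucc + lam i * c (Fin.last n)) with hIdef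
  have hJ : J = Ideal.span (insert (c (Fin.last n))
      (Set.range fun i : Fin n => c i.castSucc + lam i * c (Fin.last n))) := by
    apply le_antisymm
    · rw [hc]
      apply Ideal.span_le.mpr
      rintro x ⟨i, rfl⟩
      induction i using Fin.lastCases with
      | last => exact Ideal.subset_span (Set.mem_insert _ _)
      | cast j =>
        have h5 : c j.castSucc
            = (c j.castSucc + lam j * c (Fin.last n)) - lam j * c (Fin.last n) := by ring
        rw [h5]
        exact Ideal.sub_mem _ (Ideal.subset_span (Set.mem_insert_of_mem _ ⟨j, rfl⟩))
          (Ideal.mul_mem_left _ _ (Ideal.subset_span (Set.mem_insert _ _)))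
    · apply Ideal.span_le.mpr
      rintro x (rfl | ⟨j, rfl⟩)
      · rw [hc]; exact Ideal.subset_span ⟨Fin.last n, rfl⟩
      · rw [hc]
        exact Ideal.add_mem _ (Ideal.subset_span ⟨j.castSucc, rfl⟩)
          (Ideal.mul_mem_left _ _ (Ideal.subset_span ⟨Fin.last n, rfl⟩))
  have hhtle : ∀ x : PrimeSpectrum R, Order.height x ≤ ((n + 1 : ℕ) : ℕ∞) := by
    intro x
    have h := Order.height_le_krullDim x
    rw [show Order.krullDim (PrimeSpectrum R) = ringKrullDim R from rfl, hdim] at h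
    exact_mod_cast h
  have hq_ht : ∀ q (hq : q ∈ I.minimalPrimes),
      (n : ℕ∞) ≤ Order.height (⟨q, hq.1.1⟩ : PrimeSpectrum R) := by
    intro q hq
    by_cases hcl : c (Fin.last n) ∈ q
    · have hJq : J ≤ q := by
        rw [hJ]
        apply Ideal.span_le.mpr
        rintro x (rfl | hx)
        · exact hcl
        · exact hq.1.2 (Ideal.subset_span hx)
      have h6 : idealHeight J ≤ Order.height (⟨q, hq.1.1⟩ : PrimeSpectrum R) :=
        iInf_le (fun p : {p : PrimeSpectrum R // J ≤ p.asIdeal} => Order.height p.val)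
          ⟨⟨q, hq.1.1⟩, hJq⟩
      rw [hht] at h6
      refine le_trans ?_ h6
      exact_mod_cast Nat.le_succ n
    · exact hlam q hq hcl
  refine ⟨lam, ?_, hJ, ?_⟩
  · rcases isEmpty_or_nonempty (PrimeSpectrum (R ⧸ I)) with he | he
    · rw [show ringKrullDim (R ⧸ I) = Order.krullDim (PrimeSpectrum (R ⧸ I)) from rfl,
        Order.krullDim_eq_bot]
      exact bot_le
    · rw [show ringKrullDim (R ⧸ I) = Order.krullDim (PrimeSpectrum (R ⧸ I)) from rfl,
        Order.krullDim_eq_iSup_length,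
        show (1 : WithBot ℕ∞) = ((1 : ℕ∞) : WithBot ℕ∞) from rfl, WithBot.coe_le_coe]
      apply iSup_le
      intro l
      have hmono : Monotone (PrimeSpectrum.comap (Ideal.Quotient.mk I)) := by
        intro x y hxy
        show (PrimeSpectrum.comap _ x).asIdeal ≤ (PrimeSpectrum.comap _ y).asIdeal
        simp only [PrimeSpectrum.comap_asIdeal]
        exact Ideal.comap_mono hxy
      have hsm : StrictMono (PrimeSpectrum.comap (Ideal.Quotient.mk I)) :=
        hmono.strictMono_of_injective
          (PrimeSpectrum.comap_injective_of_surjective _ Ideal.Quotient.mk_surjective)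
      set l' := l.map _ hsm with hl'
      have hhead : I ≤ l'.head.asIdeal := by
        have h7 : l'.head = PrimeSpectrum.comap (Ideal.Quotient.mk I) l.head := by
          simp [hl']
        rw [h7]
        simp only [PrimeSpectrum.comap_asIdeal]
        have h9 : RingHom.ker (Ideal.Quotient.mk I)
            ≤ Ideal.comap (Ideal.Quotient.mk I) (RelSeries.head l).asIdeal := by
          rw [RingHom.ker_eq_comap_bot]
          exact Ideal.comap_mono bot_le
        exact le_trans (le_of_eq Ideal.mk_ker.symm) h9
      haveI : l'.head.asIdeal.IsPrime := l'.head.2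
      obtain ⟨q, hq, hqle⟩ := Ideal.exists_minimalPrimes_le hhead
      have h0 : (n : ℕ∞) ≤ Order.height l'.head :=
        le_trans (hq_ht q hq)
          (Order.height_mono (show (⟨q, hq.1.1⟩ : PrimeSpectrum R) ≤ l'.head from hqle))
      obtain ⟨s, hslast, hslen⟩ := Order.exists_series_of_le_height l'.head h0
      have hlen := Order.length_le_height_last (p := s.smash l' hslast)
      rw [RelSeries.last_smash] at hlen
      have hfin2 : ((s.length + l'.length : ℕ) : ℕ∞) ≤ ((n + 1 : ℕ) : ℕ∞) :=
        le_trans (by exact_mod_cast hlen) (hhtle _)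
      have h8 : s.length + l'.length ≤ n + 1 := by exact_mod_cast hfin2
      have hll : l'.length = l.length := rfl
      have hl1 : l.length ≤ 1 := by omega
      exact_mod_cast hl1
  · intro i
    have h4 : (b i.castSucc + lam i * b (Fin.last n)) -
        (c i.castSucc + lam i * c (Fin.last n))
        = (b i.castSucc - c i.castSucc) + lam i * (b (Fin.last n) - c (Fin.last n)) := by ring
    rw [h4]
    exact Ideal.add_mem _ (hbc _) (Ideal.mul_mem_left _ _ (hbc _))
end
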